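/- For a stable scalar discrete-time closed loop, the integral over θ ∈ [−1/2, 1/2] of log |S(e^{j2πθ})|, where S(λ) = det(λI − A) / det(λI − A − BC) is the sensitivity function, equals the sum of log |λ_i| over eigenvalues λ_i of A with |λ_i| > 1 (assuming A + BC has all eigenvalues inside the unit disk and A has no eigenvalues on the unit circle). -/

import Mathlib

open Complex Metric

lemma mean_log_one_sub {a : ℂ} (ha : ‖a‖ < 1) :
    ∫ θ in (0:ℝ)..(2*Real.pi), Real.log ‖1 - a * Complex.exp (θ * Complex.I)‖ = 0 := by
  set f : ℂ → ℂ := fun z => Complex.log (1 - a * z) with hf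
  have hre : ∀ z : ℂ, ‖z‖ ≤ 1 → 0 < (1 - a * z).re := by
    intro z hz
    have h1 : ‖a * z‖ < 1 := by
      calc ‖a * z‖ = ‖a‖ * ‖z‖ := norm_mul a z
      _ ≤ ‖a‖ * 1 := by gcongr
      _ < 1 := by simpa using ha
    have h2 : |(a*z).re| ≤ ‖a*z‖ := Complex.abs_re_le_norm _
    simp only [Complex.sub_re, Complex.one_re]
    have := abs_lt.mp (lt_of_le_of_lt h2 h1)
    linarith [this.2]
  have hslit : ∀ z : ℂ, ‖z‖ ≤ 1 → (1 - a * z) ∈ Complex.slitPlane := fun z hz =>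
    Or.inl (hre z hz)
  have hdiff : ∀ z ∈ ball (0:ℂ) 1, DifferentiableAt ℂ f z := by
    intro z hz
    simp only [mem_ball, dist_zero_right] at hz
    exact (Complex.differentiableAt_log (hslit z hz.le)).comp (f := fun z : ℂ => 1 - a * z) (x := z)
      (by fun_prop)
  have hcont : ContinuousOn f (closedBall (0:ℂ) 1) := by
    intro z hz
    simp only [mem_closedBall, dist_zero_right] at hz
    exact (((by fun_prop : Continuous fun z : ℂ => 1 - a * z).continuousAt).clog (hslit z hz)).continuousWithinAt
  have hint := circleIntegral_sub_inv_smul_of_differentiable_on_off_countable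
    (Set.countable_empty) (mem_ball_self one_pos) hcont (fun x hx => hdiff x hx.1)
  have hf0 : f 0 = 0 := by simp [hf]
  rw [hf0, smul_zero] at hint
  -- unfold the circle integral
  rw [circleIntegral] at hint
  have hintg : ∀ θ : ℝ, (deriv (circleMap 0 1) θ) • ((circleMap 0 1 θ - 0)⁻¹ • f (circleMap 0 1 θ))
      = Complex.I * f (Complex.exp (θ * Complex.I)) := by
    intro θ
    rw [deriv_circleMap]
    have h1 : circleMap 0 1 θ = Complex.exp (θ * Complex.I) := by simp [circleMap]
    have h2 : Complex.exp (θ * Complex.I) ≠ 0 := Complex.exp_ne_zero _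
    rw [h1]
    simp only [sub_zero, smul_eq_mul]
    field_simp
  rw [intervalIntegral.integral_congr (fun θ _ => hintg θ)] at hint
  rw [intervalIntegral.integral_const_mul] at hint
  have hI : (∫ θ in (0:ℝ)..(2*Real.pi), f (Complex.exp (θ * Complex.I))) = 0 := by
    have := mul_eq_zero.mp hint
    rcases this with h | h
    · exact absurd h Complex.I_ne_zero
    · exact h
  have hcont2 : Continuous fun θ : ℝ => f (Complex.exp (θ * Complex.I)) := by
    rw [continuous_iff_continuousAt]
    intro θ
    have h3 : ‖Complex.exp ((θ:ℂ) * Complex.I)‖ ≤ 1 := by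
      rw [Complex.norm_exp]
      simp
    exact ((by fun_prop : Continuous fun θ : ℝ => 1 - a * Complex.exp (θ * Complex.I)).continuousAt).clog (hslit _ h3)
  have hInteg : IntervalIntegrable (fun θ : ℝ => f (Complex.exp (θ * Complex.I))) MeasureTheory.volume 0 (2*Real.pi) :=
    hcont2.intervalIntegrable _ _
  have hre2 := Complex.reCLM.intervalIntegral_comp_comm hInteg
  rw [hI] at hre2
  simp only [map_zero] at hre2
  calc (∫ θ in (0:ℝ)..(2*Real.pi), Real.log ‖1 - a * Complex.exp (θ * Complex.I)‖)
      = ∫ θ in (0:ℝ)..(2*Real.pi), Complex.reCLM (f (Complex.exp (θ * Complex.I))) := by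
        apply intervalIntegral.integral_congr
        intro θ _
        simp only [Complex.reCLM_apply, hf, Complex.log_re]
    _ = 0 := hre2

lemma cont_log_one_sub {a : ℂ} (ha : ‖a‖ < 1) :
    Continuous fun θ : ℝ => Real.log ‖1 - a * Complex.exp (θ * Complex.I)‖ := by
  apply Continuous.log
  · fun_prop
  · intro θ
    have h1 : ‖a * Complex.exp (θ * Complex.I)‖ < 1 := by
      rw [norm_mul]
      have : ‖Complex.exp ((θ:ℂ) * Complex.I)‖ = 1 := by
        rw [Complex.norm_exp]; simp
      rw [this, mul_one]; exact ha
    have := norm_sub_norm_le (1:ℂ) (a * Complex.exp (θ * Complex.I))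
    simp only [norm_one] at this
    have h2 : (0:ℝ) < ‖1 - a * Complex.exp (θ * Complex.I)‖ := by linarith
    exact h2.ne'

lemma mean_log_sub {μ : ℂ} (hμ : ‖μ‖ ≠ 1) :
    ∫ θ in (0:ℝ)..(2*Real.pi), Real.log ‖Complex.exp (θ * Complex.I) - μ‖ =
      2 * Real.pi * (if 1 < ‖μ‖ then Real.log ‖μ‖ else 0) := by
  rcases lt_or_gt_of_ne hμ with h | h
  · -- inside the disk
    rw [if_neg (by linarith)]
    have hpt : ∀ θ : ℝ, ‖Complex.exp (θ * Complex.I) - μ‖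
        = ‖1 - (starRingEnd ℂ μ) * Complex.exp (θ * Complex.I)‖ := by
      intro θ
      have he : Complex.exp ((θ:ℂ) * Complex.I) ≠ 0 := Complex.exp_ne_zero _
      have : Complex.exp ((θ:ℂ) * Complex.I) - μ
          = Complex.exp ((θ:ℂ) * Complex.I) * (1 - μ * Complex.exp (-(θ:ℂ) * Complex.I)) := by
        rw [mul_sub, mul_one, mul_left_comm, ← Complex.exp_add]
        simp
      rw [this, norm_mul]
      have h1 : ‖Complex.exp ((θ:ℂ) * Complex.I)‖ = 1 := by
        rw [Complex.norm_exp]; simp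
      rw [h1, one_mul]
      rw [← RCLike.norm_conj]
      congr 1
      rw [map_sub, map_one, map_mul]
      congr 1
      rw [← Complex.exp_conj]
      congr 1
      simp [Complex.conj_ofReal]
    simp only [hpt]
    rw [mean_log_one_sub (by rwa [RCLike.norm_conj])]
    ring
  · rw [if_pos h]
    have hμ0 : μ ≠ 0 := by intro h0; rw [h0] at h; simp at h; linarith
    have hinv : ‖μ⁻¹‖ < 1 := by
      rw [norm_inv]
      rw [inv_lt_one_iff₀]
      right; exact h
    have hpt : ∀ θ : ℝ, Real.log ‖Complex.exp (θ * Complex.I) - μ‖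
        = Real.log ‖μ‖ + Real.log ‖1 - μ⁻¹ * Complex.exp (θ * Complex.I)‖ := by
      intro θ
      have : Complex.exp ((θ:ℂ) * Complex.I) - μ = (-μ) * (1 - μ⁻¹ * Complex.exp (θ * Complex.I)) := by
        field_simp; ring
      rw [this, norm_mul, norm_neg]
      rw [Real.log_mul (by positivity) ?_]
      · intro h0
        have h1 : ‖μ⁻¹ * Complex.exp ((θ:ℂ) * Complex.I)‖ < 1 := by
          rw [norm_mul]
          have : ‖Complex.exp ((θ:ℂ) * Complex.I)‖ = 1 := by
            rw [Complex.norm_exp]; simp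
          rw [this, mul_one]; exact hinv
        have := norm_sub_norm_le (1:ℂ) (μ⁻¹ * Complex.exp (θ * Complex.I))
        simp only [norm_one] at this
        rw [h0] at this
        linarith
    rw [intervalIntegral.integral_congr (fun θ _ => hpt θ)]
    rw [intervalIntegral.integral_add (intervalIntegrable_const)
      ((cont_log_one_sub hinv).intervalIntegrable _ _)]
    rw [mean_log_one_sub hinv, intervalIntegral.integral_const]
    simp [smul_eq_mul]

lemma key_integral {μ : ℂ} (hμ : ‖μ‖ ≠ 1) :
    ∫ θ in (-(1:ℝ)/2)..(1/2), Real.log ‖Complex.exp (2 * Real.pi * Complex.I * θ) - μ‖ =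
      if 1 < ‖μ‖ then Real.log ‖μ‖ else 0 := by
  have hpi : (0:ℝ) < 2 * Real.pi := by positivity
  have hcv := intervalIntegral.integral_comp_mul_left
    (a := -(1:ℝ)/2) (b := (1:ℝ)/2)
    (fun t : ℝ => Real.log ‖Complex.exp (t * Complex.I) - μ‖) (ne_of_gt hpi)
  have hlhs : (∫ θ in (-(1:ℝ)/2)..(1/2), Real.log ‖Complex.exp (2 * Real.pi * Complex.I * θ) - μ‖)
      = ∫ x in (-(1:ℝ)/2)..(1/2),
          (fun t : ℝ => Real.log ‖Complex.exp (t * Complex.I) - μ‖) (2 * Real.pi * x) := by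
    apply intervalIntegral.integral_congr
    intro θ _
    simp only
    congr 3
    push_cast
    ring_nf
  rw [hlhs, hcv]
  have h1 : 2 * Real.pi * (-(1:ℝ)/2) = -Real.pi := by ring
  have h2 : 2 * Real.pi * ((1:ℝ)/2) = Real.pi := by ring
  rw [h1, h2]
  have hper : Function.Periodic (fun t : ℝ => Real.log ‖Complex.exp (t * Complex.I) - μ‖) (2 * Real.pi) := by
    intro t
    simp only
    congr 3
    push_cast
    rw [add_mul, Complex.exp_add]
    have : Complex.exp ((2:ℂ) * Real.pi * Complex.I) = 1 := by
      exact_mod_cast Complex.exp_two_pi_mul_I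
    rw [this, mul_one]
  have := hper.intervalIntegral_add_eq (-Real.pi) 0
  rw [zero_add] at this
  have hπ : -Real.pi + 2 * Real.pi = Real.pi := by ring
  rw [hπ] at this
  rw [this, mean_log_sub hμ, smul_eq_mul, ← mul_assoc, inv_mul_cancel₀ (ne_of_gt hpi), one_mul]

lemma norm_exp_circle (θ : ℝ) : ‖Complex.exp (2 * Real.pi * Complex.I * θ)‖ = 1 := by
  rw [Complex.norm_exp]
  have : ((2:ℂ) * Real.pi * Complex.I * θ).re = 0 := by simp
  rw [this, Real.exp_zero]

lemma cont_single {μ : ℂ} (hμ : ‖μ‖ ≠ 1) :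
    Continuous fun θ : ℝ => Real.log ‖Complex.exp (2 * Real.pi * Complex.I * θ) - μ‖ := by
  apply Continuous.log
  · fun_prop
  · intro θ
    rw [norm_ne_zero_iff, sub_ne_zero]
    intro h
    exact hμ (h ▸ norm_exp_circle θ)

lemma det_smul_one_sub {n : ℕ} (M : Matrix (Fin n) (Fin n) ℂ) (lam : ℂ) :
    (lam • (1 : Matrix (Fin n) (Fin n) ℂ) - M).det = M.charpoly.eval lam := by
  rw [Matrix.charpoly, ← Polynomial.coe_evalRingHom, RingHom.map_det]
  congr 1
  ext i j
  by_cases h : i = j <;>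
    simp [Matrix.charmatrix_apply, Matrix.one_apply, Matrix.diagonal_apply, h,
      Matrix.sub_apply, Matrix.smul_apply]

lemma det_factor {n : ℕ} (M : Matrix (Fin n) (Fin n) ℝ) (lam : ℂ) :
    (lam • (1 : Matrix (Fin n) (Fin n) ℂ) - M.map Complex.ofReal).det
      = ((M.charpoly.aroots ℂ).map (fun μ => lam - μ)).prod := by
  rw [det_smul_one_sub]
  have h1 : (M.map Complex.ofReal).charpoly = M.charpoly.map (algebraMap ℝ ℂ) :=
    Matrix.charpoly_map M (algebraMap ℝ ℂ)
  rw [h1]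
  have hq : M.charpoly.map (algebraMap ℝ ℂ)
      = (((M.charpoly.map (algebraMap ℝ ℂ)).roots).map
          (fun a => Polynomial.X - Polynomial.C a)).prod :=
    (IsAlgClosed.splits _).eq_prod_roots_of_monic ((M.charpoly_monic).map _)
  rw [Polynomial.aroots_def]
  conv_lhs => rw [hq]
  rw [Polynomial.eval_multiset_prod, Multiset.map_map]
  apply congrArg
  apply Multiset.map_congr rfl
  intro a _
  simp

lemma log_norm_multiset_prod (s : Multiset ℂ) (h : ∀ z ∈ s, z ≠ 0) :
    Real.log ‖s.prod‖ = (s.map fun z => Real.log ‖z‖).sum := by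
  induction s using Multiset.induction with
  | empty => simp
  | cons a s ih =>
    simp only [Multiset.prod_cons, Multiset.map_cons, Multiset.sum_cons]
    have ha : a ≠ 0 := h a (Multiset.mem_cons_self a s)
    have hs : s.prod ≠ 0 := Multiset.prod_ne_zero (fun h0 => h 0 (Multiset.mem_cons_of_mem h0) rfl)
    rw [norm_mul, Real.log_mul (norm_ne_zero_iff.2 ha) (norm_ne_zero_iff.2 hs),
      ih (fun z hz => h z (Multiset.mem_cons_of_mem hz))]

lemma integrable_and_integral (s : Multiset ℂ) (h : ∀ μ ∈ s, ‖μ‖ ≠ 1) :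
    IntervalIntegrable (fun θ : ℝ =>
        (s.map (fun μ => Real.log ‖Complex.exp (2 * Real.pi * Complex.I * θ) - μ‖)).sum)
        MeasureTheory.volume (-(1:ℝ)/2) (1/2) ∧
    (∫ θ in (-(1:ℝ)/2)..(1/2),
        (s.map (fun μ => Real.log ‖Complex.exp (2 * Real.pi * Complex.I * θ) - μ‖)).sum)
      = (s.map (fun μ => if 1 < ‖μ‖ then Real.log ‖μ‖ else 0)).sum := by
  induction s using Multiset.induction with
  | empty => simp
  | cons a s ih =>
    have ha : ‖a‖ ≠ 1 := h a (Multiset.mem_cons_self a s)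
    have hs := ih (fun μ hμ => h μ (Multiset.mem_cons_of_mem hμ))
    have hca := cont_single ha
    constructor
    · simp only [Multiset.map_cons, Multiset.sum_cons]
      exact (hca.intervalIntegrable _ _).add hs.1
    · simp only [Multiset.map_cons, Multiset.sum_cons]
      rw [intervalIntegral.integral_add (hca.intervalIntegrable _ _) hs.1, hs.2, key_integral ha]


open Matrix Polynomial

/-- The sensitivity function `S(λ) = det(λI − A)/det(λI − A − BC)` of the
scalar discrete-time loop. -/
noncomputable def sensitivity {N : ℕ} (A : Matrix (Fin N) (Fin N) ℝ)
    (B : Matrix (Fin N) (Fin 1) ℝ) (C : Matrix (Fin 1) (Fin N) ℝ) (lam : ℂ) : ℂ :=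
  (lam • (1 : Matrix (Fin N) (Fin N) ℂ) - A.map (Complex.ofReal)).det /
    (lam • (1 : Matrix (Fin N) (Fin N) ℂ) - (A + B * C).map (Complex.ofReal)).det

/-- Discrete-time Bode integral formula: if the closed loop `A + BC` has all
eigenvalues inside the unit disk and `A` has no eigenvalues on the unit
circle, then `∫_{-1/2}^{1/2} log |S(e^{j2πθ})| dθ = Σ_{|λ_i(A)|>1} log |λ_i(A)|`. -/
theorem bode_integral_formula {N : ℕ} (A : Matrix (Fin N) (Fin N) ℝ)
    (B : Matrix (Fin N) (Fin 1) ℝ) (C : Matrix (Fin 1) (Fin N) ℝ)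
    (hstab : ∀ μ ∈ (A + B * C).charpoly.aroots ℂ, ‖μ‖ < 1)
    (hcirc : ∀ μ ∈ A.charpoly.aroots ℂ, ‖μ‖ ≠ 1) :
    (∫ θ in (-(1 : ℝ) / 2)..(1 / 2),
        Real.log ‖sensitivity A B C (Complex.exp (2 * Real.pi * Complex.I * θ))‖)
      = ((A.charpoly.aroots ℂ).map
          (fun μ => if 1 < ‖μ‖ then Real.log ‖μ‖ else 0)).sum := by
  have hcircQ : ∀ μ ∈ (A + B * C).charpoly.aroots ℂ, ‖μ‖ ≠ 1 := fun μ hμ =>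
    ne_of_lt (hstab μ hμ)
  have hneA : ∀ θ : ℝ, ∀ μ ∈ A.charpoly.aroots ℂ,
      Complex.exp (2 * Real.pi * Complex.I * θ) - μ ≠ 0 := by
    intro θ μ hμ
    rw [sub_ne_zero]
    intro h
    exact hcirc μ hμ (h ▸ norm_exp_circle θ)
  have hneQ : ∀ θ : ℝ, ∀ μ ∈ (A + B * C).charpoly.aroots ℂ,
      Complex.exp (2 * Real.pi * Complex.I * θ) - μ ≠ 0 := by
    intro θ μ hμ
    rw [sub_ne_zero]
    intro h
    exact hcircQ μ hμ (h ▸ norm_exp_circle θ)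
  have hprodA : ∀ θ : ℝ,
      ((A.charpoly.aroots ℂ).map
        (fun μ => Complex.exp (2 * Real.pi * Complex.I * θ) - μ)).prod ≠ 0 := by
    intro θ
    apply Multiset.prod_ne_zero
    intro h0
    obtain ⟨μ, hμ, heq⟩ := Multiset.mem_map.1 h0
    exact hneA θ μ hμ heq
  have hprodQ : ∀ θ : ℝ,
      (((A + B * C).charpoly.aroots ℂ).map
        (fun μ => Complex.exp (2 * Real.pi * Complex.I * θ) - μ)).prod ≠ 0 := by
    intro θ
    apply Multiset.prod_ne_zero
    intro h0
    obtain ⟨μ, hμ, heq⟩ := Multiset.mem_map.1 h0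
    exact hneQ θ μ hμ heq
  have hpt : ∀ θ : ℝ,
      Real.log ‖sensitivity A B C (Complex.exp (2 * Real.pi * Complex.I * θ))‖
      = ((A.charpoly.aroots ℂ).map
          (fun μ => Real.log ‖Complex.exp (2 * Real.pi * Complex.I * θ) - μ‖)).sum
        - (((A + B * C).charpoly.aroots ℂ).map
          (fun μ => Real.log ‖Complex.exp (2 * Real.pi * Complex.I * θ) - μ‖)).sum := by
    intro θ
    rw [sensitivity, det_factor, det_factor, norm_div,
      Real.log_div (norm_ne_zero_iff.2 (hprodA θ)) (norm_ne_zero_iff.2 (hprodQ θ)),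
      log_norm_multiset_prod _ (fun z hz => by
        obtain ⟨μ, hμ, heq⟩ := Multiset.mem_map.1 hz
        exact heq ▸ hneA θ μ hμ),
      log_norm_multiset_prod _ (fun z hz => by
        obtain ⟨μ, hμ, heq⟩ := Multiset.mem_map.1 hz
        exact heq ▸ hneQ θ μ hμ),
      Multiset.map_map, Multiset.map_map]
    rfl
  have hA := integrable_and_integral (A.charpoly.aroots ℂ) hcirc
  have hQ := integrable_and_integral ((A + B * C).charpoly.aroots ℂ) hcircQ
  calc (∫ θ in (-(1 : ℝ) / 2)..(1 / 2),
        Real.log ‖sensitivity A B C (Complex.exp (2 * Real.pi * Complex.I * θ))‖)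
      = ∫ θ in (-(1 : ℝ) / 2)..(1 / 2),
          (((A.charpoly.aroots ℂ).map
            (fun μ => Real.log ‖Complex.exp (2 * Real.pi * Complex.I * θ) - μ‖)).sum
          - (((A + B * C).charpoly.aroots ℂ).map
            (fun μ => Real.log ‖Complex.exp (2 * Real.pi * Complex.I * θ) - μ‖)).sum) :=
        intervalIntegral.integral_congr (fun θ _ => hpt θ)
    _ = ((A.charpoly.aroots ℂ).map (fun μ => if 1 < ‖μ‖ then Real.log ‖μ‖ else 0)).sum
          - (((A + B * C).charpoly.aroots ℂ).map
              (fun μ => if 1 < ‖μ‖ then Real.log ‖μ‖ else 0)).sum := by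
        rw [intervalIntegral.integral_sub hA.1 hQ.1, hA.2, hQ.2]
    _ = ((A.charpoly.aroots ℂ).map (fun μ => if 1 < ‖μ‖ then Real.log ‖μ‖ else 0)).sum := by
        have : (((A + B * C).charpoly.aroots ℂ).map
            (fun μ => if 1 < ‖μ‖ then Real.log ‖μ‖ else 0)).sum = 0 := by
          apply Multiset.sum_eq_zero
          intro x hx
          obtain ⟨μ, hμ, heq⟩ := Multiset.mem_map.1 hx
          rw [← heq, if_neg (by push_neg; exact (hstab μ hμ).le)]
        rw [this, sub_zero]
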